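/- Let C ⊂ X be a set such that C̃ = cl conv(C + K) is pseudo-hyperbolic, and let A, B ⊂ X be nonempty. Then A + C ⊂ cl conv(B + C̃) if and only if A ⊂ cl conv(B + rec C̃). -/

import Mathlib

open Pointwise

/-- The recession cone of a set `C`. -/
def recessionCone {X : Type*} [NormedAddCommGroup X] [NormedSpace ℝ X] (C : Set X) : Set X :=
  {u : X | ∀ c ∈ C, ∀ t : ℝ, 0 ≤ t → c + t • u ∈ C}

/-- The barrier cone of a set `C`. -/
def barrierCone {X : Type*} [NormedAddCommGroup X] [NormedSpace ℝ X] (C : Set X) :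
    Set (X →L[ℝ] ℝ) :=
  {f : X →L[ℝ] ℝ | BddAbove (f '' C)}

/-- `C` is pseudo-hyperbolic if `bar C = (rec C)⁻`. -/
def IsPseudoHyperbolic {X : Type*} [NormedAddCommGroup X] [NormedSpace ℝ X] (C : Set X) : Prop :=
  barrierCone C = {f : X →L[ℝ] ℝ | ∀ u ∈ recessionCone C, f u ≤ 0}

/-- If `C̃ = cl conv (C + K)` is pseudo-hyperbolic, then
`A + C ⊆ cl conv (B + C̃)` iff `A ⊆ cl conv (B + rec C̃)`. -/
theorem cancellation_pseudoHyperbolic_iff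
    {X : Type*} [NormedAddCommGroup X] [NormedSpace ℝ X]
    (K : Set X) (hKcl : IsClosed K) (hKconv : Convex ℝ K)
    (hK0 : (0 : X) ∈ K)
    (hKcone : ∀ t : ℝ, 0 ≤ t → ∀ y ∈ K, t • y ∈ K)
    (C : Set X) (hC : C.Nonempty)
    (hph : IsPseudoHyperbolic (closure (convexHull ℝ (C + K))))
    (A B : Set X) (hA : A.Nonempty) (hB : B.Nonempty) :
    (A + C ⊆ closure (convexHull ℝ (B + closure (convexHull ℝ (C + K))))) ↔
    (A ⊆ closure (convexHull ℝ (B + recessionCone (closure (convexHull ℝ (C + K)))))) := by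
  set Ct := closure (convexHull ℝ (C + K)) with hCt
  set R := recessionCone Ct with hR
  -- C ⊆ Ct
  have hCsub : C ⊆ Ct := fun c hc => subset_closure (subset_convexHull ℝ _ ⟨c, hc, 0, hK0, by simp⟩)
  -- 0 ∈ R
  have hR0 : (0 : X) ∈ R := fun c hc t ht => by simpa using hc
  -- R is a cone
  have hRcone : ∀ t : ℝ, 0 ≤ t → ∀ v ∈ R, t • v ∈ R := by
    intro t ht v hv c hc s hs
    have := hv c hc (s * t) (mul_nonneg hs ht)
    simpa [mul_smul] using this
  -- K closed under addition
  have hKadd : ∀ x ∈ K, ∀ y ∈ K, x + y ∈ K := by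
    intro x hx y hy
    have h2 := hKconv hx hy (by norm_num : (0:ℝ) ≤ 1/2) (by norm_num : (0:ℝ) ≤ 1/2) (by norm_num)
    have := hKcone 2 (by norm_num) _ h2
    rwa [smul_add, smul_smul, smul_smul, (by norm_num : (2:ℝ) * (1/2) = 1), one_smul, one_smul] at this
  -- K ⊆ R
  have hKR : K ⊆ R := by
    intro k hk c hc t ht
    have htk : t • k ∈ K := hKcone t ht k hk
    -- show Ct ⊆ {x | x + t•k ∈ Ct}
    have key : Ct ⊆ {x | x + t • k ∈ Ct} := by
      apply closure_minimal
      apply convexHull_min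
      · rintro x ⟨c', hc', k', hk', rfl⟩
        exact subset_closure (subset_convexHull ℝ _
          ⟨c', hc', k' + t • k, hKadd k' hk' _ htk, (add_assoc _ _ _).symm⟩)
      · exact ((convex_convexHull ℝ _).closure.translate_preimage_left _)
      · exact IsClosed.preimage (continuous_id.add continuous_const) isClosed_closure
    have := key hc
    simpa [add_comm] using this
  constructor
  · -- forward direction
    intro h a ha
    by_contra hnot
    obtain ⟨f, u, hfu, hua⟩ := geometric_hahn_banach_closed_point
      ((convex_convexHull ℝ (B + R)).closure) isClosed_closure hnot
    obtain ⟨b₀, hb₀⟩ := hB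
    -- f b < u for b ∈ B
    have hfB : ∀ b ∈ B, f b < u := by
      intro b hb
      exact hfu b (subset_closure (subset_convexHull ℝ _ ⟨b, hb, 0, hR0, by simp⟩))
    -- f v ≤ 0 for v ∈ R
    have hfR : ∀ v ∈ R, f v ≤ 0 := by
      intro v hv
      by_contra hpos
      push_neg at hpos
      set t : ℝ := (u - f b₀) / f v with ht
      have htpos : 0 < t := div_pos (sub_pos.2 (hfB b₀ hb₀)) hpos
      have hmem : b₀ + t • v ∈ closure (convexHull ℝ (B + R)) :=
        subset_closure (subset_convexHull ℝ _ ⟨b₀, hb₀, t • v, hRcone t htpos.le v hv, rfl⟩)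
      have hlt := hfu _ hmem
      rw [map_add, map_smul, smul_eq_mul, ht, div_mul_cancel₀ _ (ne_of_gt hpos)] at hlt
      linarith
    -- hence f ∈ barrier cone of Ct
    have hfbar : f ∈ barrierCone Ct := by
      rw [hph]; exact hfR
    obtain ⟨M, hM⟩ := hfbar
    have hfCt : ∀ x ∈ Ct, f x ≤ M := fun x hx => hM ⟨x, hx, rfl⟩
    -- sup of f over C
    have hbddC : BddAbove (f '' C) := ⟨M, by rintro _ ⟨c, hc, rfl⟩; exact hfCt c (hCsub hc)⟩
    set s : ℝ := sSup (f '' C) with hs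
    have hfC_le : ∀ c ∈ C, f c ≤ s := fun c hc => le_csSup hbddC ⟨c, hc, rfl⟩
    -- f ≤ s on Ct
    have hfCt_le : ∀ x ∈ Ct, f x ≤ s := by
      intro x hx
      have : Ct ⊆ {y | f y ≤ s} := by
        apply closure_minimal
        apply convexHull_min
        · rintro _ ⟨c, hc, k, hk, rfl⟩
          have := hfR k (hKR hk)
          have := hfC_le c hc
          simp only [Set.mem_setOf_eq, map_add]
          linarith
        · exact convex_halfSpace_le f.toLinearMap.isLinear s
        · exact isClosed_le f.continuous continuous_const
      exact this hx
    -- f ≤ u + s on cl conv (B + Ct)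
    have hfBC : ∀ y ∈ closure (convexHull ℝ (B + Ct)), f y ≤ u + s := by
      intro y hy
      have : closure (convexHull ℝ (B + Ct)) ⊆ {y | f y ≤ u + s} := by
        apply closure_minimal
        apply convexHull_min
        · rintro _ ⟨b, hb, x, hx, rfl⟩
          have h1 := hfB b hb
          have h2 := hfCt_le x hx
          simp only [Set.mem_setOf_eq, map_add]
          linarith
        · exact convex_halfSpace_le f.toLinearMap.isLinear _
        · exact isClosed_le f.continuous continuous_const
      exact this hy
    -- conclude
    have hkey : ∀ c ∈ C, f c ≤ u + s - f a := by
      intro c hc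
      have : a + c ∈ closure (convexHull ℝ (B + Ct)) := h ⟨a, ha, c, hc, rfl⟩
      have := hfBC _ this
      rw [map_add] at this
      linarith
    have hsle : s ≤ u + s - f a :=
      csSup_le (hC.image f) (by rintro _ ⟨c, hc, rfl⟩; exact hkey c hc)
    linarith
  · -- reverse direction
    rintro h _ ⟨a, ha, c, hc, rfl⟩
    have key : closure (convexHull ℝ (B + R)) ⊆ {x | x + c ∈ closure (convexHull ℝ (B + Ct))} := by
      apply closure_minimal
      apply convexHull_min
      · rintro _ ⟨b, hb, v, hv, rfl⟩
        have hcv : c + v ∈ Ct := by simpa using hv c (hCsub hc) 1 zero_le_one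
        show b + v + c ∈ closure (convexHull ℝ (B + Ct))
        exact subset_closure (subset_convexHull ℝ _ ⟨b, hb, c + v, hcv, by abel⟩)
      · exact ((convex_convexHull ℝ _).closure.translate_preimage_left _)
      · exact IsClosed.preimage (continuous_id.add continuous_const) isClosed_closure
    exact key (h ha)
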